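/- For every j ∈ {0,...,κ-1} and every α in the interval [min_{k ≤ j} A_{⟨k⟩}, min_{k < j} A_{⟨k⟩}) (with min over the empty set equal to +∞), the generalized survival function satisfies μ_𝒜(x, α) = μ_j. -/
import Mathlib


open scoped Classical

/-- `𝒜` is a family of conditional aggregation operators (FCA) with respect to the
collection `𝓔`: every operator is nonnegative, monotone in the coordinates of the
conditioning set, vanishes on the indicator of the complement, and `𝒜(·|∅) = 0`. -/
def IsFCA (n : ℕ) (𝓔 : Finset (Finset (Fin n)))
    (𝒜 : Finset (Fin n) → (Fin n → ℝ) → ℝ) : Prop :=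
  (∀ E ∈ 𝓔, ∀ x : Fin n → ℝ, 0 ≤ 𝒜 E x) ∧
  (∀ E ∈ 𝓔, E ≠ ∅ → ∀ x y : Fin n → ℝ, (∀ i ∈ E, x i ≤ y i) → 𝒜 E x ≤ 𝒜 E y) ∧
  (∀ E ∈ 𝓔, E ≠ ∅ → 𝒜 E (fun i => if i ∈ E then 0 else 1) = 0) ∧
  (∀ x : Fin n → ℝ, 𝒜 ∅ x = 0)

/-- `μ` is a monotone measure on the complements of the sets of `𝓔`:
`μ ∅ = 0`, nonnegative, and monotone. -/
def IsMonMeasure (n : ℕ) (𝓔 : Finset (Finset (Fin n)))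
    (μ : Finset (Fin n) → ℝ) : Prop :=
  μ ∅ = 0 ∧ (∀ E ∈ 𝓔, 0 ≤ μ Eᶜ) ∧
  (∀ E ∈ 𝓔, ∀ F ∈ 𝓔, Eᶜ ⊆ Fᶜ → μ Eᶜ ≤ μ Fᶜ)

/-- The generalized survival function
`μ_𝒜(x, α) = min { μ(Eᶜ) : 𝒜(x|E) ≤ α, E ∈ 𝓔 }`. -/
noncomputable def gsf {n : ℕ} (𝓔 : Finset (Finset (Fin n)))
    (𝒜 : Finset (Fin n) → (Fin n → ℝ) → ℝ)
    (μ : Finset (Fin n) → ℝ) (x : Fin n → ℝ) (α : ℝ) : ℝ :=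
  sInf {m : ℝ | ∃ E ∈ 𝓔, 𝒜 E x ≤ α ∧ m = μ Eᶜ}

/-- Theorem (gsf2 (i)): for `α ∈ [min_{k ≤ j} A_⟨k⟩, min_{k < j} A_⟨k⟩)`
(with the minimum over the empty set equal to `+∞`, encoded by the universally
quantified strict upper bounds), `μ_𝒜(x, α) = μ_j = μ(F_j)`. -/
theorem stmt2 {n κ : ℕ} (𝓔 : Finset (Finset (Fin n)))
    (𝒜 : Finset (Fin n) → (Fin n → ℝ) → ℝ) (μ : Finset (Fin n) → ℝ)
    (x : Fin n → ℝ)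
    (hempty : ∅ ∈ 𝓔) (hU : (Finset.univ : Finset (Fin n)) ∈ 𝓔)
    (hA : IsFCA n 𝓔 𝒜) (hμ : IsMonMeasure n 𝓔 μ) (hx : ∀ i, 0 ≤ x i)
    (hκ : 𝓔.card = κ)
    (Fstar : Fin κ → Finset (Fin n))
    (hFmem : ∀ j, (Fstar j)ᶜ ∈ 𝓔) (hFinj : Function.Injective Fstar)
    (hμmono : ∀ i j : Fin κ, i ≤ j → μ (Fstar i) ≤ μ (Fstar j))
    (j : Fin κ) (α : ℝ)
    (hα₁ : sInf {m : ℝ | ∃ k : Fin κ, k ≤ j ∧ m = 𝒜 (Fstar k)ᶜ x} ≤ α)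
    (hα₂ : ∀ k : Fin κ, k < j → α < 𝒜 (Fstar k)ᶜ x) :
    gsf 𝓔 𝒜 μ x α = μ (Fstar j) := by
  -- k ↦ (Fstar k)ᶜ is surjective onto 𝓔
  have hsurj : ∀ E ∈ 𝓔, ∃ k : Fin κ, (Fstar k)ᶜ = E := by
    have hg : Function.Bijective
        (fun k : Fin κ => (⟨(Fstar k)ᶜ, hFmem k⟩ : {E // E ∈ 𝓔})) := by
      rw [Fintype.bijective_iff_injective_and_card]
      refine ⟨fun a b hab => hFinj ?_, by simp [Fintype.card_coe, hκ]⟩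
      have : (Fstar a)ᶜ = (Fstar b)ᶜ := congrArg Subtype.val hab
      exact compl_inj_iff.mp this
    intro E hE
    obtain ⟨k, hk⟩ := hg.2 ⟨E, hE⟩
    exact ⟨k, congrArg Subtype.val hk⟩
  -- 𝒜 (Fstar j)ᶜ x ≤ α
  have hAj : 𝒜 (Fstar j)ᶜ x ≤ α := by
    set T : Set ℝ := {m : ℝ | ∃ k : Fin κ, k ≤ j ∧ m = 𝒜 (Fstar k)ᶜ x} with hT
    have hTne : T.Nonempty := ⟨𝒜 (Fstar j)ᶜ x, j, le_refl j, rfl⟩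
    have hTfin : T.Finite := by
      have : T ⊆ (fun k : Fin κ => 𝒜 (Fstar k)ᶜ x) '' Set.univ := by
        rintro m ⟨k, _, rfl⟩; exact ⟨k, trivial, rfl⟩
      exact ((Set.finite_univ).image _).subset this
    have hmem := hTne.csInf_mem hTfin
    obtain ⟨k, hkj, hkeq⟩ := hmem
    rcases lt_or_eq_of_le hkj with hlt | heq
    · exact absurd (hkeq ▸ hα₁) (not_le_of_gt (hα₂ k hlt))
    · rw [← heq, ← hkeq]; exact hα₁
  set S : Set ℝ := {m : ℝ | ∃ E ∈ 𝓔, 𝒜 E x ≤ α ∧ m = μ Eᶜ} with hS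
  have hleast : IsLeast S (μ (Fstar j)) := by
    constructor
    · exact ⟨(Fstar j)ᶜ, hFmem j, hAj, by rw [compl_compl]⟩
    · rintro m ⟨E, hE, hAE, rfl⟩
      obtain ⟨k, rfl⟩ := hsurj E hE
      rw [compl_compl]
      refine hμmono j k (le_of_not_gt fun hlt => ?_)
      exact absurd hAE (not_le_of_gt (hα₂ k hlt))
  exact hleast.csInf_eq
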